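/- Let φ_1, …, φ_n : ℝ → ℝ be differentiable strictly convex functions and let û minimize Φ(u) = Σ_i φ_i(u_i) over {u₁ ≤ ⋯ ≤ u_n}. Let B = {p, p+1, …, q} be a maximal block of indices on which û is constant, with common value w. Then: (i) Σ_{r∈B} φ_r'(w) = 0, and w is the unique solution of Σ_{r∈B} φ_r'(t) = 0; (ii) for every head-subset S = {p, p+1, …, s} with s ≤ q, Σ_{r∈S} φ_r'(w) ≤ 0. -/

import Mathlib

open Set Filter Topology

/-- Block characterization of the isotonic minimizer: on a maximal block of constancy
the sum of the derivatives vanishes (and the block value is the unique root), and the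
head-subset sums are nonpositive. -/
theorem isotonic_block_characterization (n : ℕ) (φ φ' : ℕ → ℝ → ℝ)
    (hconv : ∀ i ∈ Finset.Icc 1 n, StrictConvexOn ℝ Set.univ (φ i))
    (hderiv : ∀ i ∈ Finset.Icc 1 n, ∀ x : ℝ, HasDerivAt (φ i) (φ' i x) x)
    (uhat : ℕ → ℝ)
    (hmono : ∀ i j, i ∈ Finset.Icc 1 n → j ∈ Finset.Icc 1 n → i ≤ j → uhat i ≤ uhat j)
    (hmin : IsMinOn (fun u : ℕ → ℝ => ∑ i ∈ Finset.Icc 1 n, φ i (u i))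
        {u : ℕ → ℝ | ∀ i j, i ∈ Finset.Icc 1 n → j ∈ Finset.Icc 1 n → i ≤ j → u i ≤ u j} uhat)
    (p q : ℕ) (w : ℝ) (hp : 1 ≤ p) (hpq : p ≤ q) (hq : q ≤ n)
    (hblock : ∀ r ∈ Finset.Icc p q, uhat r = w)
    (hmaxl : p = 1 ∨ uhat (p - 1) < w)
    (hmaxr : q = n ∨ w < uhat (q + 1)) :
    (∑ r ∈ Finset.Icc p q, φ' r w = 0) ∧
    (∀ t : ℝ, ∑ r ∈ Finset.Icc p q, φ' r t = 0 → t = w) ∧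
    (∀ s ∈ Finset.Icc p q, ∑ r ∈ Finset.Icc p s, φ' r w ≤ 0) := by
  have hsubB : Finset.Icc p q ⊆ Finset.Icc 1 n := Finset.Icc_subset_Icc hp hq
  -- generic perturbation lemma
  have key : ∀ c : ℕ → ℝ, ∀ δ : ℝ, 0 < δ →
      (∀ ε ∈ Ioo (0:ℝ) δ, (fun i => uhat i + ε * c i) ∈
        {u : ℕ → ℝ | ∀ i j, i ∈ Finset.Icc 1 n → j ∈ Finset.Icc 1 n → i ≤ j → u i ≤ u j}) →
      0 ≤ ∑ i ∈ Finset.Icc 1 n, φ' i (uhat i) * c i := by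
    intro c δ hδ hfeas
    set g : ℝ → ℝ := fun ε => ∑ i ∈ Finset.Icc 1 n, φ i (uhat i + ε * c i) with hg
    have hgd : HasDerivAt g (∑ i ∈ Finset.Icc 1 n, φ' i (uhat i) * c i) 0 := by
      apply HasDerivAt.fun_sum
      intro i hi
      have hinner : HasDerivAt (fun ε : ℝ => uhat i + ε * c i) (c i) 0 := by
        simpa using ((hasDerivAt_id (0:ℝ)).mul_const (c i)).const_add (uhat i)
      have := (hderiv i hi (uhat i + 0 * c i)).comp 0 hinner
      simpa [Function.comp_def] using this
    have hslope : ∀ᶠ ε in 𝓝[>] (0:ℝ), 0 ≤ slope g 0 ε := by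
      filter_upwards [Ioo_mem_nhdsGT_of_mem ⟨le_refl (0:ℝ), hδ⟩] with ε hε
      have h1 : g 0 ≤ g ε := by
        have := hmin (hfeas ε hε)
        simpa [hg] using this
      rw [slope_def_field]
      have hε0 : (0:ℝ) < ε := hε.1
      have : (0:ℝ) < ε - 0 := by linarith
      exact div_nonneg (by linarith) (by linarith)
    have htend : Tendsto (slope g 0) (𝓝[>] (0:ℝ))
        (𝓝 (∑ i ∈ Finset.Icc 1 n, φ' i (uhat i) * c i)) :=
      (hasDerivAt_iff_tendsto_slope.mp hgd).mono_left
        (nhdsWithin_mono 0 (fun x hx => ne_of_gt hx))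
    exact ge_of_tendsto htend hslope
  -- head-subset sums nonpositive
  have head : ∀ s ∈ Finset.Icc p q, ∑ r ∈ Finset.Icc p s, φ' r w ≤ 0 := by
    intro s hs
    obtain ⟨hps, hsq⟩ := Finset.mem_Icc.mp hs
    set c : ℕ → ℝ := fun i => if i ∈ Finset.Icc p s then (-1:ℝ) else 0 with hc
    set δ : ℝ := if p = 1 then 1 else w - uhat (p - 1) with hδdef
    have hδ : 0 < δ := by
      rcases eq_or_ne p 1 with h2 | h2
      · simp [hδdef, h2]
      · rcases hmaxl with h1 | h1
        · exact absurd h1 h2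
        · simp only [hδdef, if_neg h2]; linarith
    have hfeas : ∀ ε ∈ Ioo (0:ℝ) δ, (fun i => uhat i + ε * c i) ∈
        {u : ℕ → ℝ | ∀ i j, i ∈ Finset.Icc 1 n → j ∈ Finset.Icc 1 n → i ≤ j → u i ≤ u j} := by
      intro ε hε i j hi hj hij
      obtain ⟨hi1, hin⟩ := Finset.mem_Icc.mp hi
      obtain ⟨hj1, hjn⟩ := Finset.mem_Icc.mp hj
      have hm := hmono i j hi hj hij
      have hε0 : (0:ℝ) < ε := hε.1
      show uhat i + ε * c i ≤ uhat j + ε * c j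
      by_cases hiS : i ∈ Finset.Icc p s <;> by_cases hjS : j ∈ Finset.Icc p s
      · simp only [hc, if_pos hiS, if_pos hjS]; linarith
      · simp only [hc, if_pos hiS, if_neg hjS]; nlinarith
      · -- i ∉ S, j ∈ S : i < p
        simp only [hc, if_neg hiS, if_pos hjS]
        obtain ⟨hjp, hjs⟩ := Finset.mem_Icc.mp hjS
        have hip : i < p := by
          by_contra h
          exact hiS (Finset.mem_Icc.mpr ⟨le_of_not_gt h, le_trans hij hjs⟩)
        have hp1 : p ≠ 1 := by omega
        have hlt : uhat (p - 1) < w := by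
          rcases hmaxl with h | h
          · exact absurd h hp1
          · exact h
        have huj : uhat j = w := hblock j (Finset.mem_Icc.mpr ⟨hjp, le_trans hjs hsq⟩)
        have hipm : uhat i ≤ uhat (p - 1) :=
          hmono i (p-1) hi (Finset.mem_Icc.mpr ⟨by omega, by omega⟩) (by omega)
        have hεδ : ε < δ := hε.2
        have hδeq : δ = w - uhat (p - 1) := by simp [hδdef, hp1]
        rw [huj]
        linarith
      · simp only [hc, if_neg hiS, if_neg hjS]; linarith
    have h0 := key c δ hδ hfeas
    have hsub : Finset.Icc p s ⊆ Finset.Icc 1 n :=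
      Finset.Icc_subset_Icc hp (le_trans hsq hq)
    have hsum : ∑ i ∈ Finset.Icc 1 n, φ' i (uhat i) * c i
        = -∑ r ∈ Finset.Icc p s, φ' r w := by
      calc ∑ i ∈ Finset.Icc 1 n, φ' i (uhat i) * c i
          = ∑ i ∈ Finset.Icc 1 n, (if i ∈ Finset.Icc p s then -φ' i (uhat i) else 0) := by
            apply Finset.sum_congr rfl
            intro i _
            by_cases h : i ∈ Finset.Icc p s
            · simp only [hc, if_pos h]; ring
            · simp only [hc, if_neg h]; ring
        _ = ∑ i ∈ Finset.Icc 1 n ∩ Finset.Icc p s, -φ' i (uhat i) :=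
            Finset.sum_ite_mem _ _ _
        _ = ∑ i ∈ Finset.Icc p s, -φ' i (uhat i) := by
            rw [Finset.inter_eq_right.mpr hsub]
        _ = -∑ r ∈ Finset.Icc p s, φ' r w := by
            rw [← Finset.sum_neg_distrib]
            apply Finset.sum_congr rfl
            intro r hr
            rw [hblock r (Finset.Icc_subset_Icc_right hsq hr)]
    rw [hsum] at h0
    linarith
  -- full-block sum nonnegative
  have full : 0 ≤ ∑ r ∈ Finset.Icc p q, φ' r w := by
    set c : ℕ → ℝ := fun i => if i ∈ Finset.Icc p q then (1:ℝ) else 0 with hc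
    set δ : ℝ := if q = n then 1 else uhat (q + 1) - w with hδdef
    have hδ : 0 < δ := by
      rcases eq_or_ne q n with h2 | h2
      · simp [hδdef, h2]
      · rcases hmaxr with h1 | h1
        · exact absurd h1 h2
        · simp only [hδdef, if_neg h2]; linarith
    have hfeas : ∀ ε ∈ Ioo (0:ℝ) δ, (fun i => uhat i + ε * c i) ∈
        {u : ℕ → ℝ | ∀ i j, i ∈ Finset.Icc 1 n → j ∈ Finset.Icc 1 n → i ≤ j → u i ≤ u j} := by
      intro ε hε i j hi hj hij
      obtain ⟨hi1, hin⟩ := Finset.mem_Icc.mp hi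
      obtain ⟨hj1, hjn⟩ := Finset.mem_Icc.mp hj
      have hm := hmono i j hi hj hij
      have hε0 : (0:ℝ) < ε := hε.1
      show uhat i + ε * c i ≤ uhat j + ε * c j
      by_cases hiS : i ∈ Finset.Icc p q <;> by_cases hjS : j ∈ Finset.Icc p q
      · simp only [hc, if_pos hiS, if_pos hjS]; linarith
      · -- i ∈ B, j ∉ B : j > q
        simp only [hc, if_pos hiS, if_neg hjS]
        obtain ⟨hipq, hiq⟩ := Finset.mem_Icc.mp hiS
        have hjq : q < j := by
          by_contra h
          exact hjS (Finset.mem_Icc.mpr ⟨le_trans hipq hij, le_of_not_gt h⟩)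
        have hqn : q ≠ n := by omega
        have hlt : w < uhat (q + 1) := by
          rcases hmaxr with h | h
          · exact absurd h hqn
          · exact h
        have hui : uhat i = w := hblock i hiS
        have hjm : uhat (q + 1) ≤ uhat j :=
          hmono (q+1) j (Finset.mem_Icc.mpr ⟨by omega, by omega⟩) hj (by omega)
        have hεδ : ε < δ := hε.2
        have hδeq : δ = uhat (q + 1) - w := by simp [hδdef, hqn]
        rw [hui]
        linarith
      · simp only [hc, if_neg hiS, if_pos hjS]; linarith
      · simp only [hc, if_neg hiS, if_neg hjS]; linarith
    have h0 := key c δ hδ hfeas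
    have hsum : ∑ i ∈ Finset.Icc 1 n, φ' i (uhat i) * c i
        = ∑ r ∈ Finset.Icc p q, φ' r w := by
      calc ∑ i ∈ Finset.Icc 1 n, φ' i (uhat i) * c i
          = ∑ i ∈ Finset.Icc 1 n, (if i ∈ Finset.Icc p q then φ' i (uhat i) else 0) := by
            apply Finset.sum_congr rfl
            intro i _
            by_cases h : i ∈ Finset.Icc p q
            · simp only [hc, if_pos h]; ring
            · simp only [hc, if_neg h]; ring
        _ = ∑ i ∈ Finset.Icc 1 n ∩ Finset.Icc p q, φ' i (uhat i) :=
            Finset.sum_ite_mem _ _ _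
        _ = ∑ i ∈ Finset.Icc p q, φ' i (uhat i) := by
            rw [Finset.inter_eq_right.mpr hsubB]
        _ = ∑ r ∈ Finset.Icc p q, φ' r w := by
            apply Finset.sum_congr rfl
            intro r hr
            rw [hblock r hr]
    rw [hsum] at h0
    exact h0
  have hzero : ∑ r ∈ Finset.Icc p q, φ' r w = 0 :=
    le_antisymm (head q (Finset.mem_Icc.mpr ⟨hpq, le_refl q⟩)) full
  refine ⟨hzero, ?_, head⟩
  -- uniqueness via strict monotonicity of each φ' r
  intro t ht
  have hne : (Finset.Icc p q).Nonempty := Finset.nonempty_Icc.mpr hpq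
  have hmonoD : ∀ r ∈ Finset.Icc p q, ∀ x y : ℝ, x < y → φ' r x < φ' r y := by
    intro r hr x y hxy
    have hr' := hsubB hr
    have h1 := (hconv r hr').lt_slope_of_hasDerivAt (mem_univ x) (mem_univ y) hxy
      (hderiv r hr' x)
    have h2 := (hconv r hr').slope_lt_of_hasDerivAt (mem_univ x) (mem_univ y) hxy
      (hderiv r hr' y)
    linarith
  by_contra htw
  rcases lt_or_gt_of_ne htw with h | h
  · have : ∑ r ∈ Finset.Icc p q, φ' r t < ∑ r ∈ Finset.Icc p q, φ' r w :=
      Finset.sum_lt_sum_of_nonempty hne (fun r hr => hmonoD r hr t w h)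
    rw [ht, hzero] at this
    exact lt_irrefl _ this
  · have : ∑ r ∈ Finset.Icc p q, φ' r w < ∑ r ∈ Finset.Icc p q, φ' r t :=
      Finset.sum_lt_sum_of_nonempty hne (fun r hr => hmonoD r hr w t h)
    rw [ht, hzero] at this
    exact lt_irrefl _ this
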